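/- Let X be a nontrivial real normed linear space. Then DW(X) = sup{ 2‖u+v‖ / ‖u+v+δ(u−v)‖ : u, v ∈ S_X, 0 < δ < 1 }. -/

import Mathlib

section DWaux

variable {X : Type*} [NormedAddCommGroup X] [NormedSpace ℝ X]

private lemma dw_aux_bound (x y : X) (hx : x ≠ 0) (hy : y ≠ 0) :
    ‖‖x‖⁻¹ • x - ‖y‖⁻¹ • y‖ ≤ 2 * ‖x - y‖ / ‖x‖ := by
  have ha : (0:ℝ) < ‖x‖ := norm_pos_iff.mpr hx
  have hb : (0:ℝ) < ‖y‖ := norm_pos_iff.mpr hy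
  have h1 : ‖‖x‖⁻¹ • x - ‖x‖⁻¹ • y‖ = ‖x - y‖ / ‖x‖ := by
    rw [← smul_sub, norm_smul, Real.norm_eq_abs, abs_inv, abs_of_pos ha]
    ring
  have h2 : ‖‖x‖⁻¹ • y - ‖y‖⁻¹ • y‖ ≤ ‖x - y‖ / ‖x‖ := by
    rw [← sub_smul, norm_smul, Real.norm_eq_abs,
      inv_sub_inv ha.ne' hb.ne', abs_div, abs_of_pos (mul_pos ha hb)]
    have hle : |‖y‖ - ‖x‖| ≤ ‖x - y‖ := by
      calc |‖y‖ - ‖x‖| ≤ ‖y - x‖ := abs_norm_sub_norm_le y x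
        _ = ‖x - y‖ := norm_sub_rev y x
    calc |‖y‖ - ‖x‖| / (‖x‖ * ‖y‖) * ‖y‖ = |‖y‖ - ‖x‖| / ‖x‖ := by
          field_simp
      _ ≤ ‖x - y‖ / ‖x‖ := by gcongr
  calc ‖‖x‖⁻¹ • x - ‖y‖⁻¹ • y‖
      ≤ ‖‖x‖⁻¹ • x - ‖x‖⁻¹ • y‖ + ‖‖x‖⁻¹ • y - ‖y‖⁻¹ • y‖ :=
        norm_sub_le_norm_sub_add_norm_sub _ _ _
    _ ≤ ‖x - y‖ / ‖x‖ + ‖x - y‖ / ‖x‖ := by rw [h1]; linarith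
    _ = 2 * ‖x - y‖ / ‖x‖ := by ring

private lemma dw_le_four (x y : X) (hx : x ≠ 0) (hy : y ≠ 0) (hxy : x ≠ y) :
    (‖x‖ + ‖y‖) / ‖x - y‖ * ‖‖x‖⁻¹ • x - ‖y‖⁻¹ • y‖ ≤ 4 := by
  have ha : (0:ℝ) < ‖x‖ := norm_pos_iff.mpr hx
  have hb : (0:ℝ) < ‖y‖ := norm_pos_iff.mpr hy
  have hd : (0:ℝ) < ‖x - y‖ := by
    rw [norm_pos_iff]; exact sub_ne_zero.mpr hxy
  set N := ‖‖x‖⁻¹ • x - ‖y‖⁻¹ • y‖ with hN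
  have hN0 : 0 ≤ N := norm_nonneg _
  have h1 : ‖x‖ * N ≤ 2 * ‖x - y‖ := by
    have := dw_aux_bound x y hx hy
    calc ‖x‖ * N ≤ ‖x‖ * (2 * ‖x - y‖ / ‖x‖) := by
          exact mul_le_mul_of_nonneg_left this ha.le
      _ = 2 * ‖x - y‖ := by field_simp
  have h2 : ‖y‖ * N ≤ 2 * ‖x - y‖ := by
    have hb2 := dw_aux_bound y x hy hx
    have hrw : ‖‖y‖⁻¹ • y - ‖x‖⁻¹ • x‖ = N := by rw [norm_sub_rev]
    rw [hrw, norm_sub_rev] at hb2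
    calc ‖y‖ * N ≤ ‖y‖ * (2 * ‖x - y‖ / ‖y‖) := by
          exact mul_le_mul_of_nonneg_left hb2 hb.le
      _ = 2 * ‖x - y‖ := by field_simp
  have : (‖x‖ + ‖y‖) / ‖x - y‖ * N = (‖x‖ * N + ‖y‖ * N) / ‖x - y‖ := by ring
  rw [this, div_le_iff₀ hd]
  linarith

end DWaux

/-- `DW(X) = sup { 2‖u+v‖ / ‖u+v+δ(u−v)‖ : u, v ∈ S_X, 0 < δ < 1 }`. -/
theorem dunkl_williams_eq_DW4 {X : Type*} [NormedAddCommGroup X] [NormedSpace ℝ X]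
    [Nontrivial X] :
    sSup {c : ℝ | ∃ x y : X, x ≠ 0 ∧ y ≠ 0 ∧ x ≠ y ∧
      c = (‖x‖ + ‖y‖) / ‖x - y‖ * ‖‖x‖⁻¹ • x - ‖y‖⁻¹ • y‖} =
    sSup {c : ℝ | ∃ u v : X, ∃ δ : ℝ, ‖u‖ = 1 ∧ ‖v‖ = 1 ∧ 0 < δ ∧ δ < 1 ∧
      c = 2 * ‖u + v‖ / ‖u + v + δ • (u - v)‖} := by
  set A := {c : ℝ | ∃ x y : X, x ≠ 0 ∧ y ≠ 0 ∧ x ≠ y ∧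
      c = (‖x‖ + ‖y‖) / ‖x - y‖ * ‖‖x‖⁻¹ • x - ‖y‖⁻¹ • y‖} with hA
  set B := {c : ℝ | ∃ u v : X, ∃ δ : ℝ, ‖u‖ = 1 ∧ ‖v‖ = 1 ∧ 0 < δ ∧ δ < 1 ∧
      c = 2 * ‖u + v‖ / ‖u + v + δ • (u - v)‖} with hB
  -- a unit vector
  obtain ⟨z, hz⟩ := exists_ne (0 : X)
  have hznorm : (0:ℝ) < ‖z‖ := norm_pos_iff.mpr hz
  set e : X := ‖z‖⁻¹ • z with he
  have heu : ‖e‖ = 1 := by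
    rw [he, norm_smul, Real.norm_eq_abs, abs_inv, abs_norm,
      inv_mul_cancel₀ hznorm.ne']
  have he0 : e ≠ 0 := by
    intro h; rw [h, norm_zero] at heu; norm_num at heu
  -- 2 ∈ B
  have h2B : (2:ℝ) ∈ B := by
    refine ⟨e, e, 1/2, heu, heu, by norm_num, by norm_num, ?_⟩
    have : e + e + (1/2 : ℝ) • (e - e) = (2:ℝ) • e := by
      rw [sub_self, smul_zero, add_zero, two_smul]
    rw [this]
    have h2e : e + e = (2:ℝ) • e := (two_smul ℝ e).symm
    rw [h2e, norm_smul, Real.norm_eq_abs, heu]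
    norm_num
  -- B ⊆ A
  have hBA : B ⊆ A := by
    rintro c ⟨u, v, δ, hu, hv, hδ0, hδ1, rfl⟩
    have hu0 : u ≠ 0 := by intro h; rw [h, norm_zero] at hu; norm_num at hu
    have hv0 : v ≠ 0 := by intro h; rw [h, norm_zero] at hv; norm_num at hv
    have h1δ : (0:ℝ) < 1 + δ := by linarith
    have h1δ' : (0:ℝ) < 1 - δ := by linarith
    refine ⟨(1 + δ) • u, (δ - 1) • v, smul_ne_zero h1δ.ne' hu0,
      smul_ne_zero (by linarith : δ - 1 ≠ 0) hv0, ?_, ?_⟩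
    · intro h
      have := congrArg norm h
      rw [norm_smul, norm_smul, Real.norm_eq_abs, Real.norm_eq_abs, hu, hv,
        abs_of_pos h1δ, abs_of_neg (by linarith : δ - 1 < 0)] at this
      simp only [mul_one] at this
      linarith
    · have hnx : ‖(1 + δ) • u‖ = 1 + δ := by
        rw [norm_smul, Real.norm_eq_abs, hu, abs_of_pos h1δ, mul_one]
      have hny : ‖(δ - 1) • v‖ = 1 - δ := by
        rw [norm_smul, Real.norm_eq_abs, hv, abs_of_neg (by linarith : δ - 1 < 0),
          mul_one]; ring
      have hsub : (1 + δ) • u - (δ - 1) • v = u + v + δ • (u - v) := by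
        module
      have hux : ‖(1 + δ) • u‖⁻¹ • ((1 + δ) • u) = u := by
        rw [hnx, smul_smul, inv_mul_cancel₀ h1δ.ne', one_smul]
      have hvy : ‖(δ - 1) • v‖⁻¹ • ((δ - 1) • v) = -v := by
        rw [hny, smul_smul]
        have : (1 - δ)⁻¹ * (δ - 1) = -1 := by
          field_simp
          ring
        rw [this, neg_one_smul]
      rw [hsub, hux, hvy, hnx, hny, sub_neg_eq_add]
      have : (1 + δ + (1 - δ)) = (2:ℝ) := by ring
      rw [this, div_mul_eq_mul_div]
  -- A bounded above by 4
  have hbddA : BddAbove A := by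
    refine ⟨4, ?_⟩
    rintro c ⟨x, y, hx, hy, hxy, rfl⟩
    exact dw_le_four x y hx hy hxy
  have hbddB : BddAbove B := hbddA.mono hBA
  have hAne : A.Nonempty := ⟨2, hBA h2B⟩
  have hBne : B.Nonempty := ⟨2, h2B⟩
  -- key: the "big norm" case gives membership in B
  have hmemB : ∀ x y : X, x ≠ 0 → y ≠ 0 → x ≠ y → ‖y‖ < ‖x‖ →
      (‖x‖ + ‖y‖) / ‖x - y‖ * ‖‖x‖⁻¹ • x - ‖y‖⁻¹ • y‖ ∈ B := by
    intro x y hx hy hxy hba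
    have ha : (0:ℝ) < ‖x‖ := norm_pos_iff.mpr hx
    have hb : (0:ℝ) < ‖y‖ := norm_pos_iff.mpr hy
    have hab : (0:ℝ) < ‖x‖ + ‖y‖ := by linarith
    have hd : (0:ℝ) < ‖x - y‖ := by
      rw [norm_pos_iff]; exact sub_ne_zero.mpr hxy
    set δ : ℝ := (‖x‖ - ‖y‖) / (‖x‖ + ‖y‖) with hδ
    refine ⟨‖x‖⁻¹ • x, -(‖y‖⁻¹ • y), δ, ?_, ?_, ?_, ?_, ?_⟩
    · rw [norm_smul, Real.norm_eq_abs, abs_inv, abs_norm, inv_mul_cancel₀ ha.ne']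
    · rw [norm_neg, norm_smul, Real.norm_eq_abs, abs_inv, abs_norm,
        inv_mul_cancel₀ hb.ne']
    · exact div_pos (by linarith) hab
    · rw [div_lt_one hab]; linarith
    · have hkey : ‖x‖⁻¹ • x + -(‖y‖⁻¹ • y) + δ • (‖x‖⁻¹ • x - -(‖y‖⁻¹ • y)) =
          (2 / (‖x‖ + ‖y‖)) • (x - y) := by
        rw [hδ]
        match_scalars
        · field_simp; ring
        · field_simp; ring
      have hsum : ‖x‖⁻¹ • x + -(‖y‖⁻¹ • y) = ‖x‖⁻¹ • x - ‖y‖⁻¹ • y := by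
        rw [sub_eq_add_neg]
      rw [hkey, hsum, norm_smul, Real.norm_eq_abs,
        abs_of_pos (div_pos two_pos hab)]
      rw [eq_div_iff (by positivity : (2 / (‖x‖ + ‖y‖)) * ‖x - y‖ ≠ 0)]
      field_simp
  refine le_antisymm ?_ ?_
  · refine csSup_le hAne ?_
    rintro c ⟨x, y, hx, hy, hxy, rfl⟩
    have ha : (0:ℝ) < ‖x‖ := norm_pos_iff.mpr hx
    have hd : (0:ℝ) < ‖x - y‖ := by
      rw [norm_pos_iff]; exact sub_ne_zero.mpr hxy
    rcases lt_trichotomy ‖y‖ ‖x‖ with h | h | h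
    · exact le_csSup hbddB (hmemB x y hx hy hxy h)
    · -- equal norms: value is 2
      have hval : (‖x‖ + ‖y‖) / ‖x - y‖ * ‖‖x‖⁻¹ • x - ‖y‖⁻¹ • y‖ = 2 := by
        rw [← h]
        have : ‖y‖⁻¹ • x - ‖y‖⁻¹ • y = ‖y‖⁻¹ • (x - y) := (smul_sub _ _ _).symm
        rw [this, norm_smul, Real.norm_eq_abs, abs_inv, abs_norm, h]
        field_simp
        ring
      rw [hval]
      exact le_csSup hbddB h2B
    · -- symmetric case
      have hsym : (‖x‖ + ‖y‖) / ‖x - y‖ * ‖‖x‖⁻¹ • x - ‖y‖⁻¹ • y‖ =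
          (‖y‖ + ‖x‖) / ‖y - x‖ * ‖‖y‖⁻¹ • y - ‖x‖⁻¹ • x‖ := by
        rw [norm_sub_rev y x, norm_sub_rev (‖y‖⁻¹ • y), add_comm ‖y‖]
      rw [hsym]
      exact le_csSup hbddB (hmemB y x hy hx (Ne.symm hxy) h)
  · exact csSup_le hBne fun c hc => le_csSup hbddA (hBA hc)
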